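/- Let $\mathcal{C}=\{u\in\mathbb{R}^k : H^T u \ge 0\}$ be a polyhedral cone given by a matrix $H\in\mathbb{R}^{k\times t}$. Then there exists $\theta>0$ such that for every $u\in\mathcal{C}$ with $\|u\|\ge 1$ there exists $u'\in\mathcal{C}$ with $\|u'\|=1$ such that for every column $h$ of $H$, either ($h\cdot u \ge \theta$ and $h\cdot u' \ge \theta$) or $h\cdot u = h\cdot u'$. -/

import Mathlib

open RealInnerProductSpace

lemma pcup_exists_theta {k t : ℕ} (h : Fin t → EuclideanSpace ℝ (Fin k)) :
    ∃ Θ : ℝ, 0 < Θ ∧ ∀ A : Finset (Fin t), ∀ v : EuclideanSpace ℝ (Fin k),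
      v ∈ Submodule.span ℝ (h '' ↑A) → (∀ i ∈ A, |⟪h i, v⟫| ≤ Θ) → ‖v‖ ≤ 1 := by
  have key : ∀ A : Finset (Fin t), ∃ c : ℝ, 0 < c ∧ ∀ v : EuclideanSpace ℝ (Fin k),
      v ∈ Submodule.span ℝ (h '' ↑A) → (∀ i ∈ A, |⟪h i, v⟫| ≤ c) → ‖v‖ ≤ 1 := by
    intro A
    set V := Submodule.span ℝ (h '' ↑A) with hV
    classical
    set L : ↥V →ₗ[ℝ] (Fin t → ℝ) := LinearMap.pi
      (fun i => if i ∈ A then ((innerSL ℝ (h i)).toLinearMap.comp V.subtype) else 0) with hL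
    have hker : LinearMap.ker L = ⊥ := by
      rw [LinearMap.ker_eq_bot']
      intro v hv
      have hinner : ∀ i ∈ A, ⟪h i, (v : EuclideanSpace ℝ (Fin k))⟫ = 0 := by
        intro i hi
        have := congrFun hv i
        simpa [hL, LinearMap.pi_apply, hi] using this
      have hperp : (v : EuclideanSpace ℝ (Fin k)) ∈ Vᗮ := by
        rw [Submodule.mem_orthogonal]
        intro w hw
        induction hw using Submodule.span_induction with
        | mem x hx =>
          obtain ⟨i, hi, rfl⟩ := hx
          exact hinner i (Finset.mem_coe.1 hi)
        | zero => simp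
        | add x y hx hy ihx ihy => rw [inner_add_left, ihx, ihy]; ring
        | smul a x hx ih => rw [real_inner_smul_left, ih]; ring
      have : (v : EuclideanSpace ℝ (Fin k)) ∈ V ⊓ Vᗮ := ⟨v.2, hperp⟩
      have h0 : (v : EuclideanSpace ℝ (Fin k)) = 0 := by
        have := (Submodule.orthogonal_disjoint V).le_bot this
        simpa using this
      exact Subtype.ext h0
    obtain ⟨K, hK0, hK⟩ := L.exists_antilipschitzWith hker
    refine ⟨1 / ((K : ℝ) + 1), by positivity, ?_⟩
    intro v hv hvb
    set v' : ↥V := ⟨v, hv⟩ with hv'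
    have hnorm : ‖L v'‖ ≤ 1 / ((K : ℝ) + 1) := by
      rw [pi_norm_le_iff_of_nonneg (by positivity)]
      intro i
      by_cases hi : i ∈ A
      · simpa [hL, LinearMap.pi_apply, hi, Real.norm_eq_abs] using hvb i hi
      · simp [hL, LinearMap.pi_apply, hi]
        positivity
    have h1 : ‖v'‖ ≤ (K : ℝ) * ‖L v'‖ := by
      have := hK.le_mul_dist v' 0
      simpa [dist_eq_norm, map_zero] using this
    have h2 : ‖v‖ = ‖v'‖ := rfl
    rw [h2]
    calc ‖v'‖ ≤ (K : ℝ) * ‖L v'‖ := h1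
    _ ≤ (K : ℝ) * (1 / ((K : ℝ) + 1)) := by
        exact mul_le_mul_of_nonneg_left hnorm (by positivity)
    _ ≤ 1 := by
        rw [mul_one_div, div_le_one (by positivity)]
        linarith
  choose f hf using key
  classical
  have hne : (Finset.univ : Finset (Finset (Fin t))).Nonempty := Finset.univ_nonempty
  refine ⟨Finset.univ.inf' hne f, ?_, ?_⟩
  · rw [Finset.lt_inf'_iff]
    exact fun A _ => (hf A).1
  · intro A v hv hvb
    refine (hf A).2 v hv (fun i hi => le_trans (hvb i hi) ?_)
    exact Finset.inf'_le f (Finset.mem_univ A)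

lemma pcup_stage {k t : ℕ} (h : Fin t → EuclideanSpace ℝ (Fin k)) {Θ : ℝ} (hΘ : 0 < Θ)
    (hΘ2 : ∀ A : Finset (Fin t), ∀ v : EuclideanSpace ℝ (Fin k),
      v ∈ Submodule.span ℝ (h '' ↑A) → (∀ i ∈ A, |⟪h i, v⟫| ≤ Θ) → ‖v‖ ≤ 1)
    (A : Finset (Fin t)) (u : EuclideanSpace ℝ (Fin k))
    (hA : ∀ i ∈ A, 0 ≤ ⟪h i, u⟫ ∧ ⟪h i, u⟫ ≤ Θ)
    (hnA : ∀ i ∉ A, Θ ≤ ⟪h i, u⟫) (hu : 1 ≤ ‖u‖) :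
    ∃ v : EuclideanSpace ℝ (Fin k), 1 ≤ ‖v‖ ∧ (∀ i ∈ A, ⟪h i, v⟫ = ⟪h i, u⟫) ∧
      (∀ i ∉ A, Θ ≤ ⟪h i, v⟫) ∧ (‖v‖ = 1 ∨ ∃ i ∉ A, ⟪h i, v⟫ ≤ Θ) := by
  classical
  set V := Submodule.span ℝ (h '' ↑A) with hV
  set p : EuclideanSpace ℝ (Fin k) := (Submodule.orthogonalProjectionOnto V u : EuclideanSpace ℝ (Fin k))
    with hp
  set q : EuclideanSpace ℝ (Fin k) := u - p with hq
  have hpq : p + q = u := by rw [hq]; abel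
  have hqperp : ∀ i ∈ A, ⟪h i, q⟫ = 0 := by
    intro i hi
    have hqV : q ∈ Vᗮ := Submodule.sub_starProjection_mem_orthogonal (K := V) u
    have hhi : h i ∈ V := Submodule.subset_span ⟨i, Finset.mem_coe.2 hi, rfl⟩
    exact (Submodule.mem_orthogonal V q).1 hqV (h i) hhi
  have hfi : ∀ i ∈ A, ∀ s : ℝ, ⟪h i, p + s • q⟫ = ⟪h i, u⟫ := by
    intro i hi s
    rw [inner_add_right, real_inner_smul_right, hqperp i hi, ← hpq, inner_add_right,
      hqperp i hi]
    ring
  have hp1 : ‖p‖ ≤ 1 := by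
    refine hΘ2 A p (Submodule.orthogonalProjectionOnto V u).2 (fun i hi => ?_)
    have := hfi i hi 0
    rw [zero_smul, add_zero] at this
    rw [this]
    exact abs_le.2 ⟨by linarith [(hA i hi).1], (hA i hi).2⟩
  set S : Set ℝ :=
    Set.Icc (0:ℝ) 1 ∩ {s : ℝ | ‖p + s • q‖ ≤ 1 ∨ ∃ i ∉ A, ⟪h i, p + s • q⟫ ≤ Θ} with hS
  have hcont : Continuous fun s : ℝ => p + s • q :=
    continuous_const.add (continuous_id.smul continuous_const)
  have hclosed : IsClosed S := by
    refine isClosed_Icc.inter ?_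
    have : {s : ℝ | ‖p + s • q‖ ≤ 1 ∨ ∃ i ∉ A, ⟪h i, p + s • q⟫ ≤ Θ}
        = {s : ℝ | ‖p + s • q‖ ≤ 1} ∪ ⋃ i ∈ {i : Fin t | i ∉ A}, {s : ℝ | ⟪h i, p + s • q⟫ ≤ Θ} := by
      ext s
      simp [Set.mem_iUnion]
    rw [this]
    refine IsClosed.union ?_ ?_
    · exact isClosed_le (hcont.norm) continuous_const
    · refine (Set.toFinite _).isClosed_biUnion (fun i _ => ?_)
      exact isClosed_le (Continuous.inner continuous_const hcont) continuous_const
  have h0S : (0:ℝ) ∈ S := by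
    constructor
    · exact Set.mem_Icc.2 ⟨le_refl _, zero_le_one⟩
    · left
      simpa using hp1
  have hbdd : BddAbove S := ⟨1, fun s hs => hs.1.2⟩
  set c : ℝ := sSup S with hc
  have hcS : c ∈ S := hclosed.csSup_mem ⟨0, h0S⟩ hbdd
  have hc0 : 0 ≤ c := hcS.1.1
  have hc1 : c ≤ 1 := hcS.1.2
  -- points above c are not in S
  have hout : ∀ s : ℝ, c < s → s ≤ 1 →
      1 < ‖p + s • q‖ ∧ ∀ i ∉ A, Θ < ⟪h i, p + s • q⟫ := by
    intro s hcs hs1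
    have hsnot : s ∉ S := fun hmem => absurd (le_csSup hbdd hmem) (not_le.2 hcs)
    have hsIcc : s ∈ Set.Icc (0:ℝ) 1 := ⟨le_trans hc0 (le_of_lt hcs), hs1⟩
    have : ¬(‖p + s • q‖ ≤ 1 ∨ ∃ i ∉ A, ⟪h i, p + s • q⟫ ≤ Θ) := fun hor => hsnot ⟨hsIcc, hor⟩
    push_neg at this
    exact this
  -- key claim 1
  have K1 : ∀ i ∉ A, Θ ≤ ⟪h i, p + c • q⟫ := by
    intro i hi
    by_contra hcon
    push_neg at hcon
    rcases eq_or_lt_of_le hc1 with hceq | hclt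
    · rw [hceq, one_smul, hpq] at hcon
      exact absurd (hnA i hi) (not_le.2 hcon)
    · set b : ℝ := ⟪h i, q⟫ with hb
      set ε : ℝ := Θ - ⟪h i, p + c • q⟫ with hε
      have hε0 : 0 < ε := by rw [hε]; linarith
      set s : ℝ := min 1 (c + ε / (|b| + 1)) with hs
      have hcls : c < s := lt_min hclt (by
        have : 0 < ε / (|b| + 1) := by positivity
        linarith)
      have hs1 : s ≤ 1 := min_le_left _ _
      have hgt := (hout s hcls hs1).2 i hi
      have hval : ⟪h i, p + s • q⟫ = ⟪h i, p + c • q⟫ + (s - c) * b := by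
        rw [inner_add_right, inner_add_right, real_inner_smul_right, real_inner_smul_right]
        ring
      have hsc : s - c ≤ ε / (|b| + 1) := by
        have := min_le_right (1:ℝ) (c + ε / (|b| + 1))
        rw [← hs] at this
        linarith
      have habs : (s - c) * b ≤ (s - c) * |b| :=
        mul_le_mul_of_nonneg_left (le_abs_self b) (by linarith)
      have h2 : (s - c) * |b| ≤ ε / (|b| + 1) * |b| :=
        mul_le_mul_of_nonneg_right hsc (abs_nonneg b)
      have h3 : ε / (|b| + 1) * |b| < ε := by
        rw [div_mul_eq_mul_div, div_lt_iff₀ (by positivity)]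
        nlinarith [abs_nonneg b]
      rw [hval] at hgt
      rw [hε] at h3
      linarith
  -- key claim 2
  have K2 : 1 ≤ ‖p + c • q‖ := by
    by_contra hcon
    push_neg at hcon
    rcases eq_or_lt_of_le hc1 with hceq | hclt
    · rw [hceq, one_smul, hpq] at hcon
      exact absurd hu (not_le.2 hcon)
    · set ε : ℝ := 1 - ‖p + c • q‖ with hε
      have hε0 : 0 < ε := by rw [hε]; linarith
      set s : ℝ := min 1 (c + ε / (‖q‖ + 1)) with hs
      have hcls : c < s := lt_min hclt (by
        have : 0 < ε / (‖q‖ + 1) := by positivity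
        linarith)
      have hs1 : s ≤ 1 := min_le_left _ _
      have hgt := (hout s hcls hs1).1
      have hdecomp : p + s • q = (p + c • q) + (s - c) • q := by
        rw [sub_smul]; abel
      have hle : ‖p + s • q‖ ≤ ‖p + c • q‖ + (s - c) * ‖q‖ := by
        rw [hdecomp]
        refine le_trans (norm_add_le _ _) ?_
        rw [norm_smul, Real.norm_eq_abs, abs_of_nonneg (by linarith : (0:ℝ) ≤ s - c)]
      have hsc : s - c ≤ ε / (‖q‖ + 1) := by
        have := min_le_right (1:ℝ) (c + ε / (‖q‖ + 1))
        rw [← hs] at this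
        linarith
      have h2 : (s - c) * ‖q‖ ≤ ε / (‖q‖ + 1) * ‖q‖ :=
        mul_le_mul_of_nonneg_right hsc (norm_nonneg q)
      have h3 : ε / (‖q‖ + 1) * ‖q‖ < ε := by
        rw [div_mul_eq_mul_div, div_lt_iff₀ (by positivity)]
        nlinarith [norm_nonneg q]
      rw [hε] at h3
      linarith
  refine ⟨p + c • q, K2, fun i hi => hfi i hi c, K1, ?_⟩
  rcases hcS.2 with hle | hex
  · exact Or.inl (le_antisymm hle K2)
  · exact Or.inr hex
lemma pcup_main {k t : ℕ} (h : Fin t → EuclideanSpace ℝ (Fin k)) {Θ : ℝ} (hΘ : 0 < Θ)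
    (hΘ2 : ∀ A : Finset (Fin t), ∀ v : EuclideanSpace ℝ (Fin k),
      v ∈ Submodule.span ℝ (h '' ↑A) → (∀ i ∈ A, |⟪h i, v⟫| ≤ Θ) → ‖v‖ ≤ 1) :
    ∀ n : ℕ, ∀ A : Finset (Fin t), Aᶜ.card ≤ n →
      ∀ u : EuclideanSpace ℝ (Fin k), (∀ i ∈ A, 0 ≤ ⟪h i, u⟫ ∧ ⟪h i, u⟫ ≤ Θ) →
      (∀ i ∉ A, Θ ≤ ⟪h i, u⟫) → 1 ≤ ‖u‖ →
      ∃ u' : EuclideanSpace ℝ (Fin k), ‖u'‖ = 1 ∧ (∀ i ∈ A, ⟪h i, u'⟫ = ⟪h i, u⟫) ∧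
        (∀ i ∉ A, Θ ≤ ⟪h i, u'⟫) := by
  classical
  intro n
  induction n with
  | zero =>
    intro A hcard u h1 h2 h3
    obtain ⟨v, hv1, hv2, hv3, hv4⟩ := pcup_stage h hΘ hΘ2 A u h1 h2 h3
    rcases hv4 with hnorm | ⟨i₀, hi₀, _⟩
    · exact ⟨v, hnorm, hv2, hv3⟩
    · exfalso
      have : i₀ ∈ Aᶜ := Finset.mem_compl.2 hi₀
      have hpos : 0 < Aᶜ.card := Finset.card_pos.2 ⟨i₀, this⟩
      omega
  | succ n ih =>
    intro A hcard u h1 h2 h3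
    obtain ⟨v, hv1, hv2, hv3, hv4⟩ := pcup_stage h hΘ hΘ2 A u h1 h2 h3
    rcases hv4 with hnorm | ⟨i₀, hi₀, hi₀le⟩
    · exact ⟨v, hnorm, hv2, hv3⟩
    · set B : Finset (Fin t) := A ∪ Finset.univ.filter (fun i => ⟪h i, v⟫ ≤ Θ) with hB
      have hAB : A ⊆ B := Finset.subset_union_left
      have hi₀B : i₀ ∈ B := by
        rw [hB, Finset.mem_union, Finset.mem_filter]
        exact Or.inr ⟨Finset.mem_univ _, hi₀le⟩
      have hBsub : Bᶜ ⊂ Aᶜ := by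
        refine ⟨Finset.compl_subset_compl.2 hAB, fun hsub => ?_⟩
        have := hsub (Finset.mem_compl.2 hi₀)
        rw [Finset.mem_compl] at this
        exact this hi₀B
      have hBcard : Bᶜ.card ≤ n := by
        have := Finset.card_lt_card hBsub
        omega
      have hB1 : ∀ i ∈ B, 0 ≤ ⟪h i, v⟫ ∧ ⟪h i, v⟫ ≤ Θ := by
        intro i hi
        by_cases hiA : i ∈ A
        · rw [hv2 i hiA]
          exact h1 i hiA
        · rw [hB, Finset.mem_union, Finset.mem_filter] at hi
          rcases hi with hi | ⟨_, hile⟩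
          · exact absurd hi hiA
          · exact ⟨le_trans (le_of_lt hΘ) (hv3 i hiA), hile⟩
      have hB2 : ∀ i ∉ B, Θ ≤ ⟪h i, v⟫ := by
        intro i hi
        rw [hB, Finset.mem_union, Finset.mem_filter] at hi
        push_neg at hi
        exact le_of_lt (hi.2 (Finset.mem_univ _))
      obtain ⟨u', hu1, hu2, hu3⟩ := ih B hBcard v hB1 hB2 hv1
      refine ⟨u', hu1, fun i hi => ?_, fun i hi => ?_⟩
      · rw [hu2 i (hAB hi), hv2 i hi]
      · by_cases hiB : i ∈ B
        · rw [hu2 i hiB]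
          exact hv3 i hi
        · exact hu3 i hiB

theorem polyhedral_cone_unit_projection (k t : ℕ) (h : Fin t → EuclideanSpace ℝ (Fin k)) :
    ∃ θ > (0 : ℝ), ∀ u : EuclideanSpace ℝ (Fin k),
      (∀ i, 0 ≤ ⟪h i, u⟫) → 1 ≤ ‖u‖ →
      ∃ u' : EuclideanSpace ℝ (Fin k), (∀ i, 0 ≤ ⟪h i, u'⟫) ∧ ‖u'‖ = 1 ∧
        ∀ i, (θ ≤ ⟪h i, u⟫ ∧ θ ≤ ⟪h i, u'⟫) ∨ ⟪h i, u⟫ = ⟪h i, u'⟫ := by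
  classical
  obtain ⟨Θ, hΘ, hΘ2⟩ := pcup_exists_theta h
  refine ⟨Θ, hΘ, fun u hcone hu => ?_⟩
  set A : Finset (Fin t) := Finset.univ.filter (fun i => ⟪h i, u⟫ ≤ Θ) with hA
  have h1 : ∀ i ∈ A, 0 ≤ ⟪h i, u⟫ ∧ ⟪h i, u⟫ ≤ Θ := by
    intro i hi
    rw [hA, Finset.mem_filter] at hi
    exact ⟨hcone i, hi.2⟩
  have h2 : ∀ i ∉ A, Θ ≤ ⟪h i, u⟫ := by
    intro i hi
    rw [hA, Finset.mem_filter] at hi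
    push_neg at hi
    exact le_of_lt (hi (Finset.mem_univ _))
  obtain ⟨u', hu1, hu2, hu3⟩ :=
    pcup_main h hΘ hΘ2 t A (le_trans (Finset.card_le_univ _) (by simp)) u h1 h2 hu
  refine ⟨u', fun i => ?_, hu1, fun i => ?_⟩
  · by_cases hi : i ∈ A
    · rw [hu2 i hi]
      exact hcone i
    · exact le_trans (le_of_lt hΘ) (hu3 i hi)
  · by_cases hi : i ∈ A
    · exact Or.inr (hu2 i hi).symm
    · exact Or.inl ⟨h2 i hi, hu3 i hi⟩
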